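/- Let n ≥ 1 and i > n be natural numbers, let h ∈ ℤ with 1 ≤ h ≤ n, let h_j ∈ ℤ be given for each n < j < i, and let σ_j ∈ ℝ be given for each 1 ≤ j < i. For 1 ≤ j < i, set φ_j = φ(j, 1) if j ≤ n and φ_j = φ(h_j, 1) if j > n, and define the attention score s_j = φ(h, 1) · φ_j − [j > n]. Let M = {j : 1 ≤ j < i, s_j = max_{1 ≤ j' < i} s_{j'}} and let σ̄ = (1/|M|) Σ_{j ∈ M} σ_j be the saturated-attention output of the values σ_j. Then σ̄ = σ_h; that is, the head retrieves exactly the value stored at position h of the input segment. -/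

import Mathlib

open scoped RealInnerProductSpace

/-- Layer norm: subtract the mean, then normalize to unit Euclidean norm. -/
noncomputable def layerNorm {ι : Type*} [Fintype ι] (v : EuclideanSpace ℝ ι) :
    EuclideanSpace ℝ ι :=
  let c : EuclideanSpace ℝ ι :=
    WithLp.toLp 2 (fun j => v j - (∑ l, v l) / (Fintype.card ι))
  ‖c‖⁻¹ • c

/-- The layer-norm hash φ(x, y) = layer_norm(⟨x, y, −x, −y⟩) ∈ ℝ⁴. -/
noncomputable def lnHash (x y : ℝ) : EuclideanSpace ℝ (Fin 4) :=
  layerNorm (WithLp.toLp 2 ![x, y, -x, -y] : EuclideanSpace ℝ (Fin 4))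

/-- The underlying vector of `lnHash x 1`. -/
def lnVec (x : ℝ) : EuclideanSpace ℝ (Fin 4) := WithLp.toLp 2 ![x, 1, -x, -1]

lemma lnHash_eq (x : ℝ) : lnHash x 1 = ‖lnVec x‖⁻¹ • lnVec x := by
  have hc : (WithLp.toLp 2 (fun j => lnVec x j - (∑ l, lnVec x l) / (Fintype.card (Fin 4))) :
      EuclideanSpace ℝ (Fin 4)) = lnVec x := by
    have : (∑ l, lnVec x l) = 0 := by simp [lnVec, Fin.sum_univ_four]
    rw [this]; simp
  unfold lnHash layerNorm
  dsimp only
  rw [show (WithLp.toLp 2 (fun j => (![x, 1, -x, -1] : Fin 4 → ℝ) j -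
      (∑ l, (![x, 1, -x, -1] : Fin 4 → ℝ) l) / (Fintype.card (Fin 4))) : EuclideanSpace ℝ (Fin 4))
      = lnVec x from hc]

lemma lnVec_ne (x : ℝ) : lnVec x ≠ 0 := by
  intro h
  have := congrArg (fun v : EuclideanSpace ℝ (Fin 4) => v 1) h
  simp [lnVec] at this

lemma norm_lnVec_ne (x : ℝ) : ‖lnVec x‖ ≠ 0 := norm_ne_zero_iff.mpr (lnVec_ne x)

lemma norm_lnHash (x : ℝ) : ‖lnHash x 1‖ = 1 := by
  rw [lnHash_eq, norm_smul, norm_inv, norm_norm, inv_mul_cancel₀ (norm_lnVec_ne x)]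

lemma lnHash_apply (x : ℝ) (j : Fin 4) :
    lnHash x 1 j = ‖lnVec x‖⁻¹ * (lnVec x j) := by
  rw [lnHash_eq]; rfl

lemma lnHash_inj {a b : ℝ} (hab : lnHash a 1 = lnHash b 1) : a = b := by
  have h1 : lnHash a 1 1 = lnHash b 1 1 := by rw [hab]
  have h0 : lnHash a 1 0 = lnHash b 1 0 := by rw [hab]
  rw [lnHash_apply, lnHash_apply] at h1 h0
  have ea1 : lnVec a 1 = 1 := rfl
  have eb1 : lnVec b 1 = 1 := rfl
  have ea0 : lnVec a 0 = a := rfl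
  have eb0 : lnVec b 0 = b := rfl
  rw [ea1, eb1, mul_one, mul_one] at h1
  rw [ea0, eb0, h1] at h0
  exact mul_left_cancel₀ (inv_ne_zero (norm_lnVec_ne b)) h0

/-- Input-tape retrieval via the layer-norm hash (Lemma "input-tape-sigma"):
if 1 ≤ h ≤ n, the saturated-attention output of the values σ_j under the scores
s_j = φ(h,1)·φ_j − [j > n] is exactly σ_h. -/
theorem input_tape_retrieval_value (n i : ℤ) (hn : 1 ≤ n) (hni : n < i)
    (h : ℤ) (hh1 : 1 ≤ h) (hhn : h ≤ n) (hseq : ℤ → ℤ) (σ : ℤ → ℝ) :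
    let φj : ℤ → EuclideanSpace ℝ (Fin 4) :=
      fun j => if j ≤ n then lnHash (j : ℝ) 1 else lnHash ((hseq j : ℤ) : ℝ) 1
    let s : ℤ → ℝ := fun j => ⟪lnHash (h : ℝ) 1, φj j⟫ - (if n < j then 1 else 0)
    let J : Finset ℤ := Finset.Ico 1 i
    let M : Finset ℤ := J.filter fun j => ∀ j' ∈ J, s j' ≤ s j
    (M.card : ℝ)⁻¹ • ∑ j ∈ M, σ j = σ h := by
  intro φj s J M
  have hnormφ : ∀ j, ‖φj j‖ = 1 := by
    intro j
    by_cases hj : j ≤ n <;> simp [φj, hj, norm_lnHash]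
  have hinner_le : ∀ j, ⟪lnHash (h : ℝ) 1, φj j⟫ ≤ 1 := by
    intro j
    calc ⟪lnHash (h : ℝ) 1, φj j⟫ ≤ ‖lnHash (h : ℝ) 1‖ * ‖φj j‖ := real_inner_le_norm _ _
    _ = 1 := by rw [norm_lnHash, hnormφ, mul_one]
  have hs_le : ∀ j, s j ≤ 1 := by
    intro j
    have h2 : (0 : ℝ) ≤ (if n < j then 1 else 0) := by positivity
    have := hinner_le j
    simp only [s]
    linarith
  have hsh : s h = 1 := by
    have hφh : φj h = lnHash (h : ℝ) 1 := by simp [φj, hhn]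
    have hii : ⟪lnHash (h : ℝ) 1, lnHash (h : ℝ) 1⟫ = 1 := by
      rw [real_inner_self_eq_norm_sq, norm_lnHash]; norm_num
    simp only [s, hφh, hii, if_neg (not_lt.mpr hhn)]
    norm_num
  have hhJ : h ∈ J := by
    simp only [J, Finset.mem_Ico]
    exact ⟨hh1, lt_of_le_of_lt hhn hni⟩
  have hM : M = {h} := by
    ext j
    simp only [M, Finset.mem_filter, Finset.mem_singleton]
    constructor
    · rintro ⟨hjJ, hmax⟩
      have h1 : (1 : ℝ) ≤ s j := hsh ▸ hmax h hhJ
      have hjn : j ≤ n := by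
        by_contra hjn
        push_neg at hjn
        have := hinner_le j
        simp only [s, if_pos hjn] at h1
        linarith
      have hE : ⟪lnHash (h : ℝ) 1, lnHash (j : ℝ) 1⟫ = 1 := by
        have hφ : φj j = lnHash (j : ℝ) 1 := by simp [φj, hjn]
        have h2 := hinner_le j
        rw [hφ] at h2
        simp only [s, hφ, if_neg (not_lt.mpr hjn)] at h1
        linarith
      have := (inner_eq_one_iff_of_norm_eq_one (norm_lnHash (h : ℝ)) (norm_lnHash (j : ℝ))).mp hE
      exact_mod_cast (lnHash_inj this).symm
    · rintro rfl
      exact ⟨hhJ, fun j' _ => (hs_le j').trans_eq hsh.symm⟩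
  rw [hM]
  simp
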